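/- Let d ≠ e be positive integers, s, t ∈ [0,1/2], and γ ∈ ℝ. Set δ := min{s/d, t/e} and Δ := max{s/d, t/e}, and define w : ℝ → ℝ by w(y) := 2δ if |y| ≤ Δ−δ, w(y) := Δ+δ−|y| if Δ−δ < |y| ≤ Δ+δ, and w(y) := 0 otherwise. Then λ₁( A(d,s) ∩ A(e,t) ) = gcd(d,e) · ∑_{c ∈ ℤ} w( ( c − γ·(d−e)/gcd(d,e) ) / lcm(d,e) ). -/

import Mathlib

open MeasureTheory Set
open scoped ENNReal

/-- The one-dimensional set `A(d,t) = {α ∈ 𝕋 : ‖dα - γ‖ ≤ t}`. -/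
noncomputable def ApproxSet1 (γ : ℝ) (d : ℕ) (t : ℝ) : Set UnitAddCircle :=
  {α | ‖d • α - (γ : UnitAddCircle)‖ ≤ t}

lemma tsum_vol_inter_Ioc (g : ℕ) (hg : 0 < g) (K : Set ℝ) :
    ∑' b : ℤ, volume (K ∩ Set.Ioc ((b:ℝ)/g) ((b:ℝ)/g + 1)) = g * volume K := by
  have hg' : (0:ℝ) < g := by exact_mod_cast hg
  have hrw : ∀ b : ℤ, volume (K ∩ Set.Ioc ((b:ℝ)/g) ((b:ℝ)/g + 1))
      = ∫⁻ x, (Set.Ioc ((b:ℝ)/g) ((b:ℝ)/g + 1)).indicator 1 x ∂(volume.restrict K) := by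
    intro b
    rw [lintegral_indicator_one measurableSet_Ioc, Measure.restrict_apply measurableSet_Ioc,
      Set.inter_comm]
  calc ∑' b : ℤ, volume (K ∩ Set.Ioc ((b:ℝ)/g) ((b:ℝ)/g + 1))
      = ∑' b : ℤ, ∫⁻ x, (Set.Ioc ((b:ℝ)/g) ((b:ℝ)/g + 1)).indicator 1 x ∂(volume.restrict K) :=
        tsum_congr hrw
    _ = ∫⁻ x, ∑' b : ℤ, (Set.Ioc ((b:ℝ)/g) ((b:ℝ)/g + 1)).indicator 1 x ∂(volume.restrict K) :=
        (lintegral_tsum fun b => (measurable_one.indicator measurableSet_Ioc).aemeasurable).symm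
    _ = ∫⁻ _, (g : ℝ≥0∞) ∂(volume.restrict K) := by
        refine lintegral_congr fun x => ?_
        set c : ℤ := ⌈(g:ℝ) * x⌉ with hc
        have hmem : ∀ b : ℤ, x ∈ Set.Ioc ((b:ℝ)/g) ((b:ℝ)/g + 1) ↔ b ∈ Finset.Ico (c - g) c := by
          intro b
          rw [Finset.mem_Ico, Set.mem_Ioc]
          constructor
          · rintro ⟨h1, h2⟩
            have h1' : (b:ℝ) < x * g := (div_lt_iff₀ hg').mp h1
            have h2' : (x - 1) * g ≤ (b:ℝ) := (le_div_iff₀ hg').mp (by linarith)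
            constructor
            · have : c ≤ b + g := Int.ceil_le.mpr (by push_cast; nlinarith)
              omega
            · exact Int.lt_ceil.mpr (by nlinarith)
          · rintro ⟨h1, h2⟩
            have h2' : (b:ℝ) < (g:ℝ) * x := Int.lt_ceil.mp h2
            have h1' : (g:ℝ) * x ≤ (b:ℝ) + g := by
              have : c ≤ b + g := by omega
              have := Int.ceil_le.mp this
              push_cast at this; linarith
            constructor
            · exact (div_lt_iff₀ hg').mpr (by nlinarith)
            · rw [div_add' _ _ _ (ne_of_gt hg'), le_div_iff₀ hg']; nlinarith
        calc ∑' b : ℤ, (Set.Ioc ((b:ℝ)/g) ((b:ℝ)/g + 1)).indicator (1 : ℝ → ℝ≥0∞) x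
            = ∑ b ∈ Finset.Ico (c - g) c,
                (Set.Ioc ((b:ℝ)/g) ((b:ℝ)/g + 1)).indicator (1 : ℝ → ℝ≥0∞) x := by
              refine tsum_eq_sum fun b hb => ?_
              exact Set.indicator_of_notMem (fun hx => hb ((hmem b).mp hx)) _
          _ = ∑ b ∈ Finset.Ico (c - g) c, 1 := by
              refine Finset.sum_congr rfl fun b hb => ?_
              rw [Set.indicator_of_mem ((hmem b).mpr hb)]; rfl
          _ = (g : ℝ≥0∞) := by
              rw [Finset.sum_const, Int.card_Ico]
              simp
    _ = g * volume K := by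
        rw [lintegral_const, Measure.restrict_apply MeasurableSet.univ, Set.univ_inter]


lemma vol_Icc_inter_Icc (δ1 δ2 : ℝ) (h1 : 0 ≤ δ1) (h2 : 0 ≤ δ2) (c1 c2 : ℝ) :
    volume (Set.Icc (c1 - δ1) (c1 + δ1) ∩ Set.Icc (c2 - δ2) (c2 + δ2)) =
      ENNReal.ofReal (if |c1 - c2| ≤ max δ1 δ2 - min δ1 δ2 then 2 * min δ1 δ2
        else if |c1 - c2| ≤ max δ1 δ2 + min δ1 δ2 then max δ1 δ2 + min δ1 δ2 - |c1 - c2|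
        else 0) := by
  rw [Set.Icc_inter_Icc, Real.volume_Icc]
  have key : (if |c1 - c2| ≤ max δ1 δ2 - min δ1 δ2 then 2 * min δ1 δ2
        else if |c1 - c2| ≤ max δ1 δ2 + min δ1 δ2 then max δ1 δ2 + min δ1 δ2 - |c1 - c2|
        else 0) = max (min (c1 + δ1) (c2 + δ2) - max (c1 - δ1) (c2 - δ2)) 0 := by
    rcases le_total δ1 δ2 with h12 | h12 <;>
      rcases le_total 0 (c1 - c2) with hy | hy <;>
      rcases le_total (c1 + δ1) (c2 + δ2) with hm | hm <;>
      rcases le_total (c1 - δ1) (c2 - δ2) with hM | hM <;>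
      (first | rw [abs_of_nonneg hy] | rw [abs_of_nonpos hy]) <;>
      (first | rw [min_eq_left hm] | rw [min_eq_right hm]) <;>
      (first | rw [max_eq_right hM] | rw [max_eq_left hM]) <;>
      (first | rw [min_eq_left h12, max_eq_right h12] | rw [min_eq_right h12, max_eq_left h12]) <;>
      split_ifs with hA hB <;>
      (first | rw [max_eq_left (by linarith)] | rw [max_eq_right (by linarith)]) <;>
      linarith
  rw [key]
  rcases le_total (min (c1 + δ1) (c2 + δ2) - max (c1 - δ1) (c2 - δ2)) 0 with h | h
  · rw [max_eq_right h, ENNReal.ofReal_of_nonpos h, ENNReal.ofReal_zero]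
  · rw [max_eq_left h]


lemma vol_Icc_inter_Icc_null (a u : ℝ) (hu : 0 ≤ u) (h2u : 2 * u ≤ 1) (D : ℕ) (hD : 0 < D)
    (j j' : ℤ) (hjj : j ≠ j') :
    volume (Set.Icc ((a + j - u) / D) ((a + j + u) / D) ∩
      Set.Icc ((a + j' - u) / D) ((a + j' + u) / D)) = 0 := by
  have hD' : (0:ℝ) < D := by exact_mod_cast hD
  rw [Set.Icc_inter_Icc, Real.volume_Icc, ENNReal.ofReal_eq_zero]
  rcases lt_or_gt_of_ne hjj with h | h
  · have h1 : (j:ℝ) + 1 ≤ j' := by exact_mod_cast h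
    have : min ((a + j + u) / D) ((a + j' + u) / D) ≤ (a + j + u) / D := min_le_left _ _
    have : (a + j' - u) / D ≤ max ((a + j - u) / D) ((a + j' - u) / D) := le_max_right _ _
    have hle : (a + ↑j + u) / ↑D ≤ (a + ↑j' - u) / ↑D := by
      gcongr <;> linarith
    linarith [min_le_left ((a + j + u) / D) ((a + j' + u) / D),
      le_max_right ((a + j - u) / D) ((a + j' - u) / D)]
  · have h1 : (j':ℝ) + 1 ≤ j := by exact_mod_cast h
    have hle : (a + ↑j' + u) / ↑D ≤ (a + ↑j - u) / ↑D := by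
      gcongr <;> linarith
    linarith [min_le_right ((a + j + u) / D) ((a + j' + u) / D),
      le_max_left ((a + j - u) / D) ((a + j' - u) / D)]


lemma mem_preimage_ApproxSet1 (γ : ℝ) (D : ℕ) (hD : 0 < D) (u : ℝ) (x : ℝ) :
    ((x : ℝ) : UnitAddCircle) ∈ ApproxSet1 γ D u ↔
      ∃ j : ℤ, x ∈ Set.Icc ((γ + j - u) / D) ((γ + j + u) / D) := by
  have hD' : (0:ℝ) < D := by exact_mod_cast hD
  have hcoe : (D : ℕ) • ((x : ℝ) : UnitAddCircle) - (γ : UnitAddCircle)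
      = (((D : ℝ) * x - γ : ℝ) : UnitAddCircle) := by
    rw [← AddCircle.coe_nsmul, ← AddCircle.coe_sub, nsmul_eq_mul]
  constructor
  · intro h
    refine ⟨round ((D:ℝ) * x - γ), ?_⟩
    have h' : |((D:ℝ) * x - γ) - round ((D:ℝ) * x - γ)| ≤ u := by
      rw [← UnitAddCircle.norm_eq, ← hcoe]
      exact h
    rw [abs_le] at h'
    rw [Set.mem_Icc]
    constructor
    · rw [div_le_iff₀ hD']; push_cast; linarith
    · rw [le_div_iff₀ hD']; push_cast; linarith
  · rintro ⟨j, hj⟩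
    rw [Set.mem_Icc, div_le_iff₀ hD', le_div_iff₀ hD'] at hj
    show ‖(D : ℕ) • ((x : ℝ) : UnitAddCircle) - (γ : UnitAddCircle)‖ ≤ u
    rw [hcoe, UnitAddCircle.norm_eq]
    refine le_trans (round_le ((D:ℝ) * x - γ) j) ?_
    rw [abs_le]
    constructor <;> [skip; skip] <;> push_cast <;> nlinarith [hj.1, hj.2]

/-- Exact overlap formula in dimension one in terms of the tent-like weight
function `w`. -/
theorem one_dim_overlap_formula
    (d e : ℕ) (hd : 0 < d) (he : 0 < e) (hde : d ≠ e)
    (s t : ℝ) (hs : s ∈ Set.Icc (0:ℝ) (1/2)) (ht : t ∈ Set.Icc (0:ℝ) (1/2))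
    (γ : ℝ)
    (δ' Δ : ℝ) (hδ' : δ' = min (s / d) (t / e)) (hΔ : Δ = max (s / d) (t / e))
    (w : ℝ → ℝ)
    (hw : ∀ y : ℝ, w y = if |y| ≤ Δ - δ' then 2 * δ'
      else if |y| ≤ Δ + δ' then Δ + δ' - |y| else 0) :
    (volume (ApproxSet1 γ d s ∩ ApproxSet1 γ e t)).toReal
      = (Nat.gcd d e : ℝ) * ∑' c : ℤ,
          w (((c : ℝ) - γ * ((d : ℝ) - (e : ℝ)) / (Nat.gcd d e : ℝ))
              / (Nat.lcm d e : ℝ)) := by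
  have hd' : (0:ℝ) < d := by exact_mod_cast hd
  have he' : (0:ℝ) < e := by exact_mod_cast he
  -- gcd / lcm setup
  set g : ℕ := Nat.gcd d e with hgdef
  have hg : 0 < g := Nat.gcd_pos_of_pos_left e hd
  have hg' : (0:ℝ) < g := by exact_mod_cast hg
  set m : ℕ := d / g with hmdef
  set n : ℕ := e / g with hndef
  have hdgm : d = g * m := (Nat.mul_div_cancel' (Nat.gcd_dvd_left d e)).symm
  have hegn : e = g * n := (Nat.mul_div_cancel' (Nat.gcd_dvd_right d e)).symm
  have hm : 0 < m := Nat.div_pos (Nat.le_of_dvd hd (Nat.gcd_dvd_left d e)) hg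
  have hn : 0 < n := Nat.div_pos (Nat.le_of_dvd he (Nat.gcd_dvd_right d e)) hg
  have hm' : (0:ℝ) < m := by exact_mod_cast hm
  have hn' : (0:ℝ) < n := by exact_mod_cast hn
  have hdgm' : (d:ℝ) = g * m := by exact_mod_cast congrArg (Nat.cast (R := ℝ)) hdgm
  have hegn' : (e:ℝ) = g * n := by exact_mod_cast congrArg (Nat.cast (R := ℝ)) hegn
  set L : ℝ := (Nat.lcm d e : ℝ) with hLdef
  have hL : L = (g:ℝ) * m * n := by
    have h0 : (g:ℝ) * L = d * e := by
      rw [hLdef]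
      exact_mod_cast congrArg (Nat.cast (R := ℝ)) (Nat.gcd_mul_lcm d e)
    have : (g:ℝ) * L = (g:ℝ) * ((g:ℝ) * m * n) := by rw [h0, hdgm', hegn']; ring
    exact mul_left_cancel₀ (ne_of_gt hg') this
  have hL0 : (0:ℝ) < L := by rw [hL]; positivity
  -- Bezout
  have hcop : Nat.Coprime m n := Nat.coprime_div_gcd_div_gcd hg
  obtain ⟨u, v, huv⟩ : ∃ u v : ℤ, u * (m:ℤ) + v * (n:ℤ) = 1 := by
    have : IsCoprime (m:ℤ) (n:ℤ) := by
      rw [Int.isCoprime_iff_gcd_eq_one, Int.gcd_natCast_natCast]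
      exact hcop
    obtain ⟨a, b, hab⟩ := this
    exact ⟨a, b, hab⟩
  set X : ℤ := v with hXdef
  set Y : ℤ := -u with hYdef
  have hbez : X * (n:ℤ) - Y * (m:ℤ) = 1 := by rw [hXdef, hYdef]; linarith
  have hbez' : (X:ℝ) * (n:ℝ) - (Y:ℝ) * (m:ℝ) = 1 := by exact_mod_cast hbez
  -- interval families
  set Ii : ℤ → Set ℝ := fun j => Set.Icc ((γ + j - s) / d) ((γ + j + s) / d) with hIi
  set Jk : ℤ → Set ℝ := fun k => Set.Icc ((γ + k - t) / e) ((γ + k + t) / e) with hJk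
  -- the weight argument
  have hgne : (g:ℝ) ≠ 0 := ne_of_gt hg'
  have hmne : (m:ℝ) ≠ 0 := ne_of_gt hm'
  have hnne : (n:ℝ) ≠ 0 := ne_of_gt hn'
  have hdne : (d:ℝ) ≠ 0 := ne_of_gt hd'
  have hene : (e:ℝ) ≠ 0 := ne_of_gt he'
  set ya : ℤ → ℝ := fun c => ((c : ℝ) - γ * ((d : ℝ) - (e : ℝ)) / (g : ℝ)) / L with hya
  -- measurability of the circle set
  have hclosed : ∀ (D : ℕ) (r : ℝ), IsClosed (ApproxSet1 γ D r) := by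
    intro D r
    have hc : Continuous fun α : UnitAddCircle => ‖D • α - (γ : UnitAddCircle)‖ :=
      ((continuous_nsmul D).sub continuous_const).norm
    exact isClosed_le hc continuous_const
  have hSmeas : MeasurableSet (ApproxSet1 γ d s ∩ ApproxSet1 γ e t) :=
    ((hclosed d s).measurableSet).inter ((hclosed e t).measurableSet)
  -- step 1 : from the circle to [0,1]
  have step1 : volume (ApproxSet1 γ d s ∩ ApproxSet1 γ e t)
      = volume ((((↑) : ℝ → UnitAddCircle) ⁻¹' (ApproxSet1 γ d s ∩ ApproxSet1 γ e t))
          ∩ Set.Ioc (0:ℝ) 1) := by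
    rw [← (UnitAddCircle.measurePreserving_mk 0).measure_preimage hSmeas.nullMeasurableSet,
      Measure.restrict_apply' measurableSet_Ioc, zero_add]
  -- step 2 : decompose the preimage
  have step2 : (((↑) : ℝ → UnitAddCircle) ⁻¹' (ApproxSet1 γ d s ∩ ApproxSet1 γ e t))
      ∩ Set.Ioc (0:ℝ) 1 = ⋃ p : ℤ × ℤ, (Ii p.1 ∩ Jk p.2 ∩ Set.Ioc (0:ℝ) 1) := by
    ext x
    simp only [Set.mem_inter_iff, Set.mem_preimage, Set.mem_iUnion]
    rw [mem_preimage_ApproxSet1 γ d hd s x, mem_preimage_ApproxSet1 γ e he t x]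
    constructor
    · rintro ⟨⟨⟨j, hj⟩, ⟨k, hk⟩⟩, hx⟩
      exact ⟨(j, k), ⟨hj, hk⟩, hx⟩
    · rintro ⟨⟨j, k⟩, ⟨⟨hj, hk⟩, hx⟩⟩
      exact ⟨⟨⟨j, hj⟩, ⟨k, hk⟩⟩, hx⟩
  -- step 3 : countable additivity
  have hdisj : Pairwise (Function.onFun (AEDisjoint volume) fun p : ℤ × ℤ => Ii p.1 ∩ Jk p.2 ∩ Set.Ioc (0:ℝ) 1) := by
    rintro ⟨j, k⟩ ⟨j', k'⟩ hne
    by_cases hj : j = j'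
    · have hk : k ≠ k' := by rintro rfl; exact hne (by rw [hj])
      refine measure_mono_null ?_ (vol_Icc_inter_Icc_null γ t ht.1 (by linarith [ht.2]) e he k k' hk)
      rintro z ⟨⟨⟨_, h2⟩, _⟩, ⟨_, h4⟩, _⟩
      exact ⟨h2, h4⟩
    · refine measure_mono_null ?_ (vol_Icc_inter_Icc_null γ s hs.1 (by linarith [hs.2]) d hd j j' hj)
      rintro z ⟨⟨⟨h1, _⟩, _⟩, ⟨h3, _⟩, _⟩
      exact ⟨h1, h3⟩
  have hFmeas : ∀ p : ℤ × ℤ, NullMeasurableSet (Ii p.1 ∩ Jk p.2 ∩ Set.Ioc (0:ℝ) 1) volume :=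
    fun p => (((measurableSet_Icc.inter measurableSet_Icc).inter measurableSet_Ioc)).nullMeasurableSet
  have step3 : volume (⋃ p : ℤ × ℤ, (Ii p.1 ∩ Jk p.2 ∩ Set.Ioc (0:ℝ) 1))
      = ∑' p : ℤ × ℤ, volume (Ii p.1 ∩ Jk p.2 ∩ Set.Ioc (0:ℝ) 1) :=
    measure_iUnion₀ hdisj hFmeas
  -- step 4 : reindex by the unimodular change of variables
  let Ψ : ℤ × ℤ ≃ ℤ × ℤ :=
    { toFun := fun p => (p.1 * X + p.2 * m, p.1 * Y + p.2 * n)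
      invFun := fun p => (p.1 * n - p.2 * m, p.2 * X - p.1 * Y)
      left_inv := by
        rintro ⟨a, b⟩
        simp only [Prod.mk.injEq]
        constructor
        · linear_combination a * hbez
        · linear_combination b * hbez
      right_inv := by
        rintro ⟨j, k⟩
        simp only [Prod.mk.injEq]
        constructor
        · linear_combination j * hbez
        · linear_combination k * hbez }
  have step4 : ∑' p : ℤ × ℤ, volume (Ii p.1 ∩ Jk p.2 ∩ Set.Ioc (0:ℝ) 1)
      = ∑' (a : ℤ) (b : ℤ), volume (Ii (a * X + b * m) ∩ Jk (a * Y + b * n) ∩ Set.Ioc (0:ℝ) 1) := by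
    rw [← Equiv.tsum_eq Ψ (fun p : ℤ × ℤ => volume (Ii p.1 ∩ Jk p.2 ∩ Set.Ioc (0:ℝ) 1)),
      ENNReal.tsum_prod']
    rfl
  -- step 5 : translation and summation in b
  have hshift : ∀ a b : ℤ, Ii (a * X + b * m) ∩ Jk (a * Y + b * n) ∩ Set.Ioc (0:ℝ) 1
      = (fun r : ℝ => r + (-((b:ℝ) / g))) ⁻¹'
          (Ii (a * X) ∩ Jk (a * Y) ∩ Set.Ioc (((-b : ℤ):ℝ)/g) (((-b : ℤ):ℝ)/g + 1)) := by
    intro a b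
    have h1 : (γ + ((a * X : ℤ):ℝ) - s) / (d:ℝ) - -((b:ℝ) / (g:ℝ))
        = (γ + ((a * X + b * (m:ℤ) : ℤ):ℝ) - s) / (d:ℝ) := by
      push_cast
      rw [hdgm']
      field_simp
      ring
    have h2 : (γ + ((a * X : ℤ):ℝ) + s) / (d:ℝ) - -((b:ℝ) / (g:ℝ))
        = (γ + ((a * X + b * (m:ℤ) : ℤ):ℝ) + s) / (d:ℝ) := by
      push_cast
      rw [hdgm']
      field_simp
      ring
    have h3 : (γ + ((a * Y : ℤ):ℝ) - t) / (e:ℝ) - -((b:ℝ) / (g:ℝ))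
        = (γ + ((a * Y + b * (n:ℤ) : ℤ):ℝ) - t) / (e:ℝ) := by
      push_cast
      rw [hegn']
      field_simp
      ring
    have h4 : (γ + ((a * Y : ℤ):ℝ) + t) / (e:ℝ) - -((b:ℝ) / (g:ℝ))
        = (γ + ((a * Y + b * (n:ℤ) : ℤ):ℝ) + t) / (e:ℝ) := by
      push_cast
      rw [hegn']
      field_simp
      ring
    have h5 : (((-b : ℤ):ℝ)/(g:ℝ)) - -((b:ℝ) / (g:ℝ)) = 0 := by push_cast; ring
    have h6 : (((-b : ℤ):ℝ)/(g:ℝ)) + 1 - -((b:ℝ) / (g:ℝ)) = 1 := by push_cast; ring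
    simp only [hIi, hJk, Set.preimage_inter, Set.preimage_add_const_Icc,
      Set.preimage_add_const_Ioc]
    rw [h1, h2, h3, h4, h5, h6]
  have step5 : ∀ a : ℤ, ∑' b : ℤ, volume (Ii (a * X + b * m) ∩ Jk (a * Y + b * n) ∩ Set.Ioc (0:ℝ) 1)
      = (g : ℝ≥0∞) * volume (Ii (a * X) ∩ Jk (a * Y)) := by
    intro a
    have h1 : ∀ b : ℤ, volume (Ii (a * X + b * m) ∩ Jk (a * Y + b * n) ∩ Set.Ioc (0:ℝ) 1)
        = volume ((Ii (a * X) ∩ Jk (a * Y)) ∩ Set.Ioc (((-b : ℤ):ℝ)/g) (((-b : ℤ):ℝ)/g + 1)) := by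
      intro b
      rw [hshift a b, measure_preimage_add_right, Set.inter_assoc]
    calc ∑' b : ℤ, volume (Ii (a * X + b * m) ∩ Jk (a * Y + b * n) ∩ Set.Ioc (0:ℝ) 1)
        = ∑' b : ℤ, volume ((Ii (a * X) ∩ Jk (a * Y))
            ∩ Set.Ioc (((-b : ℤ):ℝ)/g) (((-b : ℤ):ℝ)/g + 1)) := tsum_congr h1
      _ = ∑' b : ℤ, volume ((Ii (a * X) ∩ Jk (a * Y))
            ∩ Set.Ioc ((b:ℝ)/g) ((b:ℝ)/g + 1)) := by
          exact ((Equiv.neg ℤ).tsum_eq fun b : ℤ => volume ((Ii (a * X) ∩ Jk (a * Y))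
            ∩ Set.Ioc ((b:ℝ)/g) ((b:ℝ)/g + 1)))
      _ = (g : ℝ≥0∞) * volume (Ii (a * X) ∩ Jk (a * Y)) :=
          tsum_vol_inter_Ioc g hg (Ii (a * X) ∩ Jk (a * Y))
  -- step 6 : the overlap of two intervals
  have harg : ∀ a : ℤ, (γ + ((a * X : ℤ):ℝ)) / d - (γ + ((a * Y : ℤ):ℝ)) / e = ya a := by
    intro a
    rw [hya]
    have expand : (γ + ((a * X : ℤ):ℝ)) / d - (γ + ((a * Y : ℤ):ℝ)) / e
        = ((n:ℝ) * (γ + a * X) - (m:ℝ) * (γ + a * Y)) / ((g:ℝ) * m * n) := by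
      rw [hdgm', hegn']
      push_cast
      field_simp
    have num : (n:ℝ) * (γ + a * X) - (m:ℝ) * (γ + a * Y) = (a:ℝ) + γ * ((n:ℝ) - m) := by
      linear_combination (a:ℝ) * hbez'
    rw [expand, num, hL, hdgm', hegn']
    dsimp only
    field_simp
    ring
  have hover : ∀ a : ℤ, volume (Ii (a * X) ∩ Jk (a * Y)) = ENNReal.ofReal (w (ya a)) := by
    intro a
    have e1 : Ii (a * X) = Set.Icc ((γ + ((a*X:ℤ):ℝ))/d - s/d) ((γ + ((a*X:ℤ):ℝ))/d + s/d) := by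
      rw [hIi]
      congr 1 <;> ring
    have e2 : Jk (a * Y) = Set.Icc ((γ + ((a*Y:ℤ):ℝ))/e - t/e) ((γ + ((a*Y:ℤ):ℝ))/e + t/e) := by
      rw [hJk]
      congr 1 <;> ring
    rw [e1, e2, vol_Icc_inter_Icc (s/d) (t/e) (div_nonneg hs.1 hd'.le) (div_nonneg ht.1 he'.le),
      harg a]
    congr 1
    rw [hw (ya a), ← hδ', ← hΔ]
  -- assemble
  have hwnonneg : ∀ y : ℝ, 0 ≤ w y := by
    intro y
    have hδ0 : 0 ≤ δ' := by
      rw [hδ']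
      exact le_min (div_nonneg hs.1 hd'.le) (div_nonneg ht.1 he'.le)
    rw [hw y]
    split_ifs with h1 h2
    · linarith
    · linarith
    · exact le_refl 0
  have hsummable : Summable fun a : ℤ => w (ya a) := by
    set C : ℝ := (Δ + δ') * L with hC
    set γ2 : ℝ := γ * ((d : ℝ) - (e : ℝ)) / (g : ℝ) with hγ2
    refine summable_of_ne_finset_zero (s := Finset.Icc ⌈γ2 - C⌉ ⌊γ2 + C⌋) ?_
    intro b hb
    rw [Finset.mem_Icc, not_and_or] at hb
    have hδ0 : 0 ≤ δ' := by
      rw [hδ']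
      exact le_min (div_nonneg hs.1 hd'.le) (div_nonneg ht.1 he'.le)
    have hbig : Δ + δ' < |ya b| := by
      have habs : |ya b| = |(b:ℝ) - γ2| / L := by
        rw [hya]
        dsimp only
        rw [abs_div, abs_of_pos hL0]
      have hΔ0 : 0 ≤ Δ := by
        rw [hΔ]
        exact le_trans (div_nonneg hs.1 hd'.le) (le_max_left _ _)
      have hC0 : 0 ≤ C := by
        rw [hC]
        exact mul_nonneg (by linarith) hL0.le
      have hgt : C < |(b:ℝ) - γ2| := by
        rcases hb with hb | hb
        · push_neg at hb
          have : (b:ℝ) < γ2 - C := by exact_mod_cast Int.lt_ceil.mp hb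
          rw [abs_sub_comm, abs_of_pos (by linarith)]
          linarith
        · push_neg at hb
          have : γ2 + C < (b:ℝ) := by exact_mod_cast Int.floor_lt.mp hb
          rw [abs_of_pos (by linarith)]
          linarith
      rw [habs, lt_div_iff₀ hL0]
      calc (Δ + δ') * L = C := by rw [hC]
        _ < |(b:ℝ) - γ2| := hgt
    rw [hw (ya b)]
    rw [if_neg (by push_neg; linarith), if_neg (by push_neg; linarith)]
  have final : volume (ApproxSet1 γ d s ∩ ApproxSet1 γ e t)
      = (g : ℝ≥0∞) * ENNReal.ofReal (∑' a : ℤ, w (ya a)) := by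
    rw [step1, step2, step3, step4]
    calc ∑' (a : ℤ) (b : ℤ), volume (Ii (a * X + b * m) ∩ Jk (a * Y + b * n) ∩ Set.Ioc (0:ℝ) 1)
        = ∑' a : ℤ, (g : ℝ≥0∞) * volume (Ii (a * X) ∩ Jk (a * Y)) := tsum_congr step5
      _ = ∑' a : ℤ, (g : ℝ≥0∞) * ENNReal.ofReal (w (ya a)) := by
          exact tsum_congr fun a => by rw [hover a]
      _ = (g : ℝ≥0∞) * ∑' a : ℤ, ENNReal.ofReal (w (ya a)) := ENNReal.tsum_mul_left
      _ = (g : ℝ≥0∞) * ENNReal.ofReal (∑' a : ℤ, w (ya a)) := by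
          rw [ENNReal.ofReal_tsum_of_nonneg (fun a => hwnonneg (ya a)) hsummable]
  rw [final, ENNReal.toReal_mul, ENNReal.toReal_natCast g,
    ENNReal.toReal_ofReal (tsum_nonneg fun a => hwnonneg (ya a))]
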